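/- Define x1 = ηα(δ + v_s + b), x2 = λ_o(δ + b)(λ + b) + λ_o v_s(δq + b) + ηω_o(δ + v_s + b) − ηα(b + δ − v_i), x3 = λ_o δ p v_i + ηω_o(b + δ − v_i), h_a = (−x2 + √(x2² + 4x1x3))/(2x1), h_n = λ_o[b − v_i + δq(1 − h_a) + λh_a]/[η(ω_o + αh_a) + λ_o(δq + b)]. Then the point E_0 = (S_n°, S_a°, I°, R°, M°) with S_n° = Nh_n, S_a° = Nh_a, I° = 0, R° = N(1 − h_n − h_a), M° = (ω_o + αh_a)/λ_o is an equilibrium of system (2); that is, all five right-hand sides (b − v_i)N − βI°S_n°/N − ηM°S_n° + λS_a° + δqR° − bS_n°, −σ_sβI°S_a°/N + ηM°S_n° − (λ + v_s + b)S_a° + δpR°, βI°S_n°/N + σ_sβI°S_a°/N − (r + b)I°, rI° + v_iN + v_sS_a° − (δ + b)R°, and ω_o + α_oI° + αS_a°/N − λ_oM° are equal to zero. -/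

import Mathlib

/-- The point `E₀` is an equilibrium (the disease-free steady state) of the
vaccination-awareness system (2): all five right-hand sides vanish at `E₀`. -/
theorem disease_free_point_is_equilibrium
    (b beta r eta lam lamo alpha alphao omegao delta vs N sigmas p q vi : ℝ)
    (hb : 0 < b) (hbeta : 0 < beta) (hr : 0 < r) (heta : 0 < eta)
    (hlam : 0 < lam) (hlamo : 0 < lamo) (halpha : 0 < alpha)
    (halphao : 0 < alphao) (homegao : 0 < omegao) (hdelta : 0 < delta)
    (hvs : 0 < vs) (hN : 0 < N)
    (hsigmas0 : 0 < sigmas) (hsigmas1 : sigmas < 1)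
    (hp0 : 0 ≤ p) (hp1 : p ≤ 1) (hq : q = 1 - p)
    (hvi0 : 0 < vi) (hvib : vi < b)
    (x1 x2 x3 ha hn Sn0 Sa0 I0 R0 M0 : ℝ)
    (hx1 : x1 = eta * alpha * (delta + vs + b))
    (hx2 : x2 = lamo * (delta + b) * (lam + b) + lamo * vs * (delta * q + b)
      + eta * omegao * (delta + vs + b) - eta * alpha * (b + delta - vi))
    (hx3 : x3 = lamo * delta * p * vi + eta * omegao * (b + delta - vi))
    (hha : ha = (-x2 + Real.sqrt (x2 ^ 2 + 4 * x1 * x3)) / (2 * x1))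
    (hhn : hn = lamo * (b - vi + delta * q * (1 - ha) + lam * ha)
      / (eta * (omegao + alpha * ha) + lamo * (delta * q + b)))
    (hSn0 : Sn0 = N * hn) (hSa0 : Sa0 = N * ha) (hI0 : I0 = 0)
    (hR0 : R0 = N * (1 - hn - ha)) (hM0 : M0 = (omegao + alpha * ha) / lamo) :
    (b - vi) * N - beta * I0 * Sn0 / N - eta * M0 * Sn0 + lam * Sa0
      + delta * q * R0 - b * Sn0 = 0 ∧
    -(sigmas * beta * I0 * Sa0 / N) + eta * M0 * Sn0
      - (lam + vs + b) * Sa0 + delta * p * R0 = 0 ∧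
    beta * I0 * Sn0 / N + sigmas * beta * I0 * Sa0 / N - (r + b) * I0 = 0 ∧
    r * I0 + vi * N + vs * Sa0 - (delta + b) * R0 = 0 ∧
    omegao + alphao * I0 + alpha * Sa0 / N - lamo * M0 = 0 := by
  subst hq
  have hx1p : 0 < x1 := by rw [hx1]; positivity
  have hx3p : 0 < x3 := by
    have : 0 < b + delta - vi := by linarith
    rw [hx3]; positivity
  have hd0 : (0:ℝ) ≤ x2 ^ 2 + 4 * x1 * x3 := by positivity
  set s := Real.sqrt (x2 ^ 2 + 4 * x1 * x3) with hsdef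
  have hs2 : s ^ 2 = x2 ^ 2 + 4 * x1 * x3 := Real.sq_sqrt hd0
  have hsnn : 0 ≤ s := Real.sqrt_nonneg _
  have hsge : x2 ≤ s := by nlinarith [mul_pos hx1p hx3p]
  have hage : 0 ≤ ha := by
    rw [hha]; apply div_nonneg (by linarith) (by linarith)
  have h2 : 2 * x1 * ha + x2 = s := by
    rw [hha]; field_simp; ring
  have key : 4 * x1 * (x1 * ha ^ 2 + x2 * ha - x3) = 0 := by
    linear_combination (2 * x1 * ha + x2 + s) * h2 + hs2
  have quad : x1 * ha ^ 2 + x2 * ha - x3 = 0 := by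
    rcases mul_eq_zero.mp key with h | h
    · exact absurd h (by positivity)
    · exact h
  rw [hx1, hx2, hx3] at quad
  have hq0 : (0:ℝ) ≤ 1 - p := by linarith
  have hDn : 0 < eta * (omegao + alpha * ha) + lamo * (delta * (1 - p) + b) := by
    have h1 : 0 ≤ alpha * ha := mul_nonneg halpha.le hage
    have h2 : 0 ≤ delta * (1 - p) := mul_nonneg hdelta.le hq0
    have := mul_pos heta (show 0 < omegao + alpha * ha by linarith)
    have := mul_pos hlamo (show 0 < delta * (1 - p) + b by linarith)
    linarith
  have Hn : hn * (eta * (omegao + alpha * ha) + lamo * (delta * (1 - p) + b))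
      = lamo * (b - vi + delta * (1 - p) * (1 - ha) + lam * ha) := by
    rw [hhn]; field_simp
  have hM : lamo * M0 = omegao + alpha * ha := by
    rw [hM0]; field_simp
  subst hSn0 hSa0 hI0 hR0
  refine ⟨?_, ?_, ?_, ?_, ?_⟩
  · have k1 : lamo * ((b - vi) * N - eta * M0 * (N * hn) + lam * (N * ha)
        + delta * (1 - p) * (N * (1 - hn - ha)) - b * (N * hn)) = 0 := by
      linear_combination (-N) * Hn + (-(N * eta * hn)) * hM
    have g1 := (mul_eq_zero.mp k1).resolve_left hlamo.ne'
    linear_combination g1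
  · have k2 : (lamo * (eta * (omegao + alpha * ha) + lamo * (delta * (1 - p) + b)))
        * (eta * M0 * (N * hn) - (lam + vs + b) * (N * ha)
          + delta * p * (N * (1 - hn - ha))) = 0 := by
      linear_combination (-(N * lamo)) * quad
        + (N * (eta * (omegao + alpha * ha) - delta * p * lamo)) * Hn
        + (N * eta * hn * (eta * (omegao + alpha * ha) + lamo * (delta * (1 - p) + b))) * hM
    have g2 := (mul_eq_zero.mp k2).resolve_left (mul_pos hlamo hDn).ne'
    linear_combination g2
  · ring
  · have k4 : (lamo * (eta * (omegao + alpha * ha) + lamo * (delta * (1 - p) + b)))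
        * (vi * N + vs * (N * ha) - (delta + b) * (N * (1 - hn - ha))) = 0 := by
      linear_combination (N * lamo) * quad + (N * (delta + b) * lamo) * Hn
    have g4 := (mul_eq_zero.mp k4).resolve_left (mul_pos hlamo hDn).ne'
    linear_combination g4
  · rw [mul_div_assoc, mul_div_cancel_left₀ _ hN.ne']
    linear_combination (-1 : ℝ) * hM
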